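/- Every ternary self-dual code C of length 24 satisfies β₂₄ = 48 − 21β₃ + β₆, where βᵢ denotes the number of codewords of weight i in C. Consequently, if C has no codeword of weight 24 (i.e., maximum weight less than 24), then C has minimum weight 3. -/

import Mathlib

open scoped BigOperators

namespace Ternary

/-- Hamming weight of a ternary vector. -/
def wt {n : ℕ} (x : Fin n → ZMod 3) : ℕ :=
  (Finset.filter (fun i => x i ≠ 0) Finset.univ).card

/-- Dual of a set of ternary vectors under the standard inner product. -/
def dualCode {n : ℕ} (C : Set (Fin n → ZMod 3)) : Set (Fin n → ZMod 3) :=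
  {x | ∀ y ∈ C, ∑ i, x i * y i = 0}

/-- A ternary self-dual code (self-duality forces linearity). -/
def IsSelfDual {n : ℕ} (C : Set (Fin n → ZMod 3)) : Prop :=
  dualCode C = C

/-- `C` has minimum weight `d`. -/
def HasMinWeight {n : ℕ} (C : Set (Fin n → ZMod 3)) (d : ℕ) : Prop :=
  (∃ x ∈ C, x ≠ 0 ∧ wt x = d) ∧ ∀ x ∈ C, x ≠ 0 → d ≤ wt x

/-- A monomial matrix: exactly one nonzero entry in each row and each column. -/
def IsMonomial {n : ℕ} (P : Matrix (Fin n) (Fin n) (ZMod 3)) : Prop :=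
  (∀ i, ∃! j, P i j ≠ 0) ∧ (∀ j, ∃! i, P i j ≠ 0)

/-- The code `C · P = {xP : x ∈ C}`. -/
def codeMul {n : ℕ} (C : Set (Fin n → ZMod 3)) (P : Matrix (Fin n) (Fin n) (ZMod 3)) :
    Set (Fin n → ZMod 3) :=
  (fun x => Matrix.vecMul x P) '' C

/-- Equivalence of ternary codes via monomial matrices. -/
def CodeEquiv {n : ℕ} (C C' : Set (Fin n → ZMod 3)) : Prop :=
  ∃ P, IsMonomial P ∧ C' = codeMul C P

/-- Standard inner product on `ℝⁿ`. -/
noncomputable def ip {n : ℕ} (x y : Fin n → ℝ) : ℝ := ∑ i, x i * y i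

/-- Construction A lattice `A₃(C) = (1/√3){x ∈ ℤⁿ : x mod 3 ∈ C}`. -/
def A3 {n : ℕ} (C : Set (Fin n → ZMod 3)) : Set (Fin n → ℝ) :=
  {v | ∃ y : Fin n → ℤ, (fun i => ((y i : ZMod 3))) ∈ C ∧
        v = fun i => (y i : ℝ) / Real.sqrt 3}

/-- The dual lattice (as a set): vectors with integral inner product with all of `L`. -/
def dualLattice {n : ℕ} (L : Set (Fin n → ℝ)) : Set (Fin n → ℝ) :=
  {x | ∀ y ∈ L, ∃ m : ℤ, ip x y = (m : ℝ)}

/-- A 3-frame of `L`: vectors `f₁, …, fₙ ∈ L` with `(fᵢ, fⱼ) = 3δᵢⱼ`. -/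
def IsFrame {n : ℕ} (L : Set (Fin n → ℝ)) (f : Fin n → Fin n → ℝ) : Prop :=
  (∀ i, f i ∈ L) ∧ ∀ i j, ip (f i) (f j) = if i = j then 3 else 0

/-- The map `π_F(x) = ((x,f₁) mod 3, …, (x,fₙ) mod 3)`, realized via `Int.floor`
(which agrees with `(x, fᵢ)` whenever that inner product is an integer). -/
noncomputable def piF {n : ℕ} (f : Fin n → Fin n → ℝ) (x : Fin n → ℝ) :
    Fin n → ZMod 3 :=
  fun i => ((⌊ip x (f i)⌋ : ℤ) : ZMod 3)

/-- The even sublattice `B₃(C)` of `A₃(C)`. -/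
def B3 {n : ℕ} (C : Set (Fin n → ZMod 3)) : Set (Fin n → ℝ) :=
  {v ∈ A3 C | ∃ m : ℤ, ip v v = 2 * (m : ℝ)}

/-- A decomposable code: a direct sum of two nonzero codes supported on
complementary sets of coordinates. -/
def IsDecomposableCode {n : ℕ} (C : Set (Fin n → ZMod 3)) : Prop :=
  ∃ S : Set (Fin n),
    (∃ x ∈ C, x ≠ 0 ∧ ∀ i ∉ S, x i = 0) ∧
    (∃ x ∈ C, x ≠ 0 ∧ ∀ i ∈ S, x i = 0) ∧
    (∀ x ∈ C, S.indicator x ∈ C)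

/-- A decomposable lattice: an orthogonal direct sum of two nonzero sublattices. -/
def IsDecomposableLattice {n : ℕ} (L : Set (Fin n → ℝ)) : Prop :=
  ∃ L₁ L₂ : Submodule ℤ (Fin n → ℝ),
    (L₁ : Set (Fin n → ℝ)) ⊆ L ∧ (L₂ : Set (Fin n → ℝ)) ⊆ L ∧
    (∃ x ∈ L₁, x ≠ (0 : Fin n → ℝ)) ∧ (∃ x ∈ L₂, x ≠ (0 : Fin n → ℝ)) ∧
    (∀ a ∈ L₁, ∀ b ∈ L₂, ip a b = 0) ∧
    L = {x | ∃ a ∈ L₁, ∃ b ∈ L₂, x = a + b}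

/-- The real all-ones vector. -/
def allOnesR (n : ℕ) : Fin n → ℝ := fun _ => 1

/-- The vector `e₁ = (√3, 0, …, 0)`. -/
noncomputable def e1 (n : ℕ) : Fin n → ℝ := fun i => if (i : ℕ) = 0 then Real.sqrt 3 else 0

/-- The straight construction `L_S(C) = ⟨(1/(2√3))𝟏, B₃(C)⟩`. -/
noncomputable def LS {n : ℕ} (C : Set (Fin n → ZMod 3)) : Set (Fin n → ℝ) :=
  {x | ∃ (m : ℤ) (b : Fin n → ℝ), b ∈ B3 C ∧
        x = (m : ℝ) • ((2 * Real.sqrt 3)⁻¹ • allOnesR n) + b}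

/-- The twisted construction `L_T(C) = ⟨(1/(2√3))𝟏 - e₁, B₃(C)⟩`. -/
noncomputable def LT {n : ℕ} (C : Set (Fin n → ZMod 3)) : Set (Fin n → ℝ) :=
  {x | ∃ (m : ℤ) (b : Fin n → ℝ), b ∈ B3 C ∧
        x = (m : ℝ) • ((2 * Real.sqrt 3)⁻¹ • allOnesR n - e1 n) + b}


open Finset

noncomputable def zeta : ℂ := Complex.exp (2 * Real.pi * Complex.I / 3)

lemma zeta_prim : IsPrimitiveRoot zeta 3 := Complex.isPrimitiveRoot_exp 3 (by norm_num)

noncomputable def chi (a : ZMod 3) : ℂ := zeta ^ a.val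

lemma zeta_pow_mod (m : ℕ) : zeta ^ m = zeta ^ (m % 3) := by
  conv_lhs => rw [← Nat.div_add_mod m 3]
  rw [pow_add, pow_mul, zeta_prim.pow_eq_one, one_pow, one_mul]

lemma chi_add (a b : ZMod 3) : chi (a + b) = chi a * chi b := by
  rw [chi, chi, chi, ZMod.val_add, ← zeta_pow_mod, ← pow_add]

lemma chi_zero : chi 0 = 1 := by simp [chi]

lemma chi_one : chi 1 = zeta := by
  rw [chi, ZMod.val_one, pow_one]

lemma chi_two : chi 2 = zeta ^ 2 := by
  have : (2 : ZMod 3).val = 2 := by decide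
  rw [chi, this]

lemma zeta_sum : 1 + zeta + zeta ^ 2 = 0 := by
  have h := zeta_prim.geom_sum_eq_zero (by norm_num)
  rw [Finset.sum_range_succ, Finset.sum_range_succ, Finset.sum_range_succ,
    Finset.sum_range_zero] at h
  simpa using h

lemma chi_sum {α : Type*} (s : Finset α) (f : α → ZMod 3) :
    chi (∑ i ∈ s, f i) = ∏ i ∈ s, chi (f i) := by
  induction s using Finset.cons_induction with
  | empty => simp [chi_zero]
  | cons a s ha ih => rw [Finset.sum_cons, Finset.prod_cons, chi_add, ih]

lemma sum_zmod3 (f : ZMod 3 → ℂ) : ∑ c, f c = f 0 + f 1 + f 2 := by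
  have h : (Finset.univ : Finset (ZMod 3)) = {0, 1, 2} := by decide
  rw [h, Finset.sum_insert (by decide), Finset.sum_insert (by decide),
    Finset.sum_singleton, add_assoc]

lemma inner_sum (b : ℂ) (m : ZMod 3) :
    ∑ c : ZMod 3, chi (c * m) * (if c = 0 then 1 else b)
      = if m = 0 then 1 + 2 * b else 1 - b := by
  have hm : m = 0 ∨ m = 1 ∨ m = 2 := by revert m; decide
  rw [sum_zmod3]
  rcases hm with h | h | h <;> subst h <;>
    simp only [mul_zero, zero_mul, mul_one, one_mul, chi_zero, chi_one, chi_two,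
      if_pos rfl, eq_self_iff_true, if_true, ite_true, if_neg (show ¬(1:ZMod 3) = 0 by decide),
      if_neg (show ¬(2:ZMod 3) = 0 by decide),
      (show (1:ZMod 3) * 2 = 2 by decide), (show (2:ZMod 3) * 2 = 1 by decide),
      (show (2:ZMod 3) * 1 = 2 by decide), (show (1:ZMod 3) * 1 = 1 by decide)]
  · ring
  · linear_combination b * zeta_sum
  · linear_combination b * zeta_sum

noncomputable def CFin (C : Set (Fin 24 → ZMod 3)) : Finset (Fin 24 → ZMod 3) :=
  C.toFinite.toFinset

lemma mem_CFin {C : Set (Fin 24 → ZMod 3)} {x : Fin 24 → ZMod 3} :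
    x ∈ CFin C ↔ x ∈ C := Set.Finite.mem_toFinset _

section Code

open scoped Classical

variable {C : Set (Fin 24 → ZMod 3)}

lemma dual_apply (hC : IsSelfDual C) {x : Fin 24 → ZMod 3} (hx : x ∈ C) :
    ∀ y ∈ C, ∑ i, x i * y i = 0 := by
  have : x ∈ dualCode C := by rw [hC]; exact hx
  exact this

lemma code_zero_mem (hC : IsSelfDual C) : (0 : Fin 24 → ZMod 3) ∈ C := by
  rw [← hC]; intro y _; simp

lemma code_add_mem (hC : IsSelfDual C) {x y : Fin 24 → ZMod 3} (hx : x ∈ C) (hy : y ∈ C) : x + y ∈ C := by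
  rw [← hC]; intro v hv
  have h1 := dual_apply hC hx v hv
  have h2 := dual_apply hC hy v hv
  simp only [Pi.add_apply, add_mul, Finset.sum_add_distrib, h1, h2, add_zero]

lemma code_neg_mem (hC : IsSelfDual C) {x : Fin 24 → ZMod 3} (hx : x ∈ C) : -x ∈ C := by
  rw [← hC]; intro v hv
  have h1 := dual_apply hC hx v hv
  simp only [Pi.neg_apply, neg_mul, Finset.sum_neg_distrib, h1, neg_zero]

lemma orth (hC : IsSelfDual C) (w : Fin 24 → ZMod 3) :
    ∑ v ∈ CFin C, chi (∑ i, w i * v i)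
      = if w ∈ C then ((CFin C).card : ℂ) else 0 := by
  classical
  by_cases hw : w ∈ C
  · rw [if_pos hw]
    rw [Finset.sum_congr rfl (fun v hv => by
      rw [dual_apply hC hw v (mem_CFin.mp hv), chi_zero])]
    rw [Finset.sum_const, nsmul_eq_mul, mul_one]
  · rw [if_neg hw]
    have hw' : ¬ ∀ v ∈ C, ∑ i, w i * v i = 0 := fun h => hw (by rw [← hC]; exact h)
    push_neg at hw'
    obtain ⟨v₀, hv₀, hs⟩ := hw'
    set s := ∑ i, w i * v₀ i with hsdef
    have key : ∑ v ∈ CFin C, chi (∑ i, w i * v i)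
        = chi s * ∑ v ∈ CFin C, chi (∑ i, w i * v i) := by
      rw [Finset.mul_sum]
      refine Finset.sum_equiv (Equiv.addRight (-v₀)) (fun v => ?_) (fun v hv => ?_)
      · simp only [Equiv.coe_addRight, mem_CFin]
        constructor
        · intro h; exact code_add_mem hC h (code_neg_mem hC hv₀)
        · intro h
          have := code_add_mem hC h hv₀
          simpa using this
      · simp only [Equiv.coe_addRight]
        rw [← chi_add]
        refine congrArg chi ?_
        have hsum : ∑ i, w i * (v + -v₀) i = (∑ i, w i * v i) - s := by
          rw [hsdef, ← Finset.sum_sub_distrib]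
          refine Finset.sum_congr rfl (fun i _ => ?_)
          simp only [Pi.add_apply, Pi.neg_apply]
          ring
        rw [hsum]
        ring
    have hchi : chi s ≠ 1 := by
      have hall : ∀ t : ZMod 3, t = 0 ∨ t = 1 ∨ t = 2 := by decide
      have hs3 : s = 1 ∨ s = 2 := by
        rcases hall s with h | h | h
        · exact absurd h hs
        · exact Or.inl h
        · exact Or.inr h
      rcases hs3 with h | h <;> rw [h]
      · rw [chi_one]; exact zeta_prim.ne_one (by norm_num)
      · rw [chi_two]; exact zeta_prim.pow_ne_one_of_pos_of_lt (by norm_num) (by norm_num)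
    have := key
    have h0 : (chi s - 1) * ∑ v ∈ CFin C, chi (∑ i, w i * v i) = 0 := by
      linear_combination -this
    rcases mul_eq_zero.mp h0 with h | h
    · exact absurd (by linear_combination h) hchi
    · exact h

lemma wt_le24 (v : Fin 24 → ZMod 3) : wt v ≤ 24 := by
  have h := Finset.card_filter_le (Finset.univ : Finset (Fin 24)) (fun i => v i ≠ 0)
  simpa [wt] using h

lemma wt_eq_zero_iff {v : Fin 24 → ZMod 3} : wt v = 0 ↔ v = 0 := by
  constructor
  · intro h
    funext i
    show v i = 0
    by_contra hi
    have : i ∈ Finset.filter (fun i => v i ≠ 0) Finset.univ := by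
      simp [hi]
    have h' : Finset.filter (fun i => v i ≠ 0) Finset.univ = ∅ :=
      Finset.card_eq_zero.mp h
    rw [h'] at this
    exact absurd this (Finset.notMem_empty i)
  · intro h; subst h; simp [wt]

lemma card_filter_eq_zero (v : Fin 24 → ZMod 3) :
    (Finset.filter (fun i => v i = 0) Finset.univ).card = 24 - wt v := by
  have h := Finset.card_filter_add_card_filter_not
    (s := (Finset.univ : Finset (Fin 24))) (p := fun i => v i = 0)
  have h2 : (Finset.filter (fun i => ¬ v i = 0) Finset.univ).card = wt v := rfl
  simp only [Finset.card_univ, Fintype.card_fin] at h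
  omega

lemma prod_ite_wt (x y : ℂ) (v : Fin 24 → ZMod 3) :
    (∏ i, if v i = 0 then x else y) = x ^ (24 - wt v) * y ^ wt v := by
  classical
  rw [Finset.prod_ite, Finset.prod_const, Finset.prod_const, card_filter_eq_zero]
  congr 1

lemma swap_sum (b : ℂ) (v : Fin 24 → ZMod 3) :
    ∑ w : Fin 24 → ZMod 3, chi (∑ i, w i * v i) * b ^ wt w
      = (1 + 2 * b) ^ (24 - wt v) * (1 - b) ^ wt v := by
  classical
  have h1 : ∀ w : Fin 24 → ZMod 3,
      chi (∑ i, w i * v i) * b ^ wt w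
        = ∏ i, (chi (w i * v i) * (if w i = 0 then 1 else b)) := by
    intro w
    rw [Finset.prod_mul_distrib, ← chi_sum]
    congr 1
    rw [prod_ite_wt, one_pow, one_mul]
  rw [Finset.sum_congr rfl (fun w _ => h1 w)]
  rw [(Fintype.prod_sum (fun (i : Fin 24) (c : ZMod 3) =>
    chi (c * v i) * if c = 0 then 1 else b)).symm]
  rw [Finset.prod_congr rfl (fun i _ => inner_sum b (v i))]
  exact prod_ite_wt _ _ v

lemma macwilliams {C : Set (Fin 24 → ZMod 3)} (hC : IsSelfDual C) (b : ℂ) :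
    ∑ v ∈ CFin C, (1 + 2 * b) ^ (24 - wt v) * (1 - b) ^ wt v
      = ((CFin C).card : ℂ) * ∑ w ∈ CFin C, b ^ wt w := by
  classical
  calc ∑ v ∈ CFin C, (1 + 2 * b) ^ (24 - wt v) * (1 - b) ^ wt v
      = ∑ v ∈ CFin C, ∑ w : Fin 24 → ZMod 3, chi (∑ i, w i * v i) * b ^ wt w := by
        exact Finset.sum_congr rfl (fun v _ => (swap_sum b v).symm)
    _ = ∑ w : Fin 24 → ZMod 3, ∑ v ∈ CFin C, chi (∑ i, w i * v i) * b ^ wt w :=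
        Finset.sum_comm
    _ = ∑ w : Fin 24 → ZMod 3, (∑ v ∈ CFin C, chi (∑ i, w i * v i)) * b ^ wt w := by
        exact Finset.sum_congr rfl (fun w _ => (Finset.sum_mul _ _ _).symm)
    _ = ∑ w : Fin 24 → ZMod 3,
          (if w ∈ C then ((CFin C).card : ℂ) else 0) * b ^ wt w := by
        exact Finset.sum_congr rfl (fun w _ => by rw [orth hC w])
    _ = ∑ w ∈ CFin C, ((CFin C).card : ℂ) * b ^ wt w := by
        simp only [ite_mul, zero_mul]
        rw [← Finset.sum_filter]
        congr 1
        ext w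
        simp [mem_CFin]
    _ = ((CFin C).card : ℂ) * ∑ w ∈ CFin C, b ^ wt w := by rw [Finset.mul_sum]

lemma card_CFin {C : Set (Fin 24 → ZMod 3)} (hC : IsSelfDual C) :
    (CFin C).card = 3 ^ 12 := by
  have h := macwilliams hC 1
  have hL : ∑ v ∈ CFin C, ((1 : ℂ) + 2 * 1) ^ (24 - wt v) * (1 - 1) ^ wt v
      = 3 ^ 24 := by
    rw [Finset.sum_eq_single_of_mem 0 (mem_CFin.mpr (code_zero_mem hC))]
    · norm_num [wt_eq_zero_iff.mpr rfl]
    · intro v _ hv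
      have : wt v ≠ 0 := fun h0 => hv (wt_eq_zero_iff.mp h0)
      norm_num [zero_pow this]
  rw [hL] at h
  have hR : ∑ w ∈ CFin C, (1 : ℂ) ^ wt w = ((CFin C).card : ℂ) := by
    simp
  rw [hR] at h
  have hN : ((CFin C).card * (CFin C).card : ℕ) = 3 ^ 24 := by
    exact_mod_cast h.symm
  have h2 : ((CFin C).card) ^ 2 = (3 ^ 12) ^ 2 := by
    rw [pow_two]; rw [hN]; norm_num
  exact Nat.pow_left_injective (by norm_num) h2

noncomputable def beta (C : Set (Fin 24 → ZMod 3)) (i : ℕ) : ℕ :=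
  ((CFin C).filter (fun v => wt v = i)).card

lemma group_sum (C : Set (Fin 24 → ZMod 3)) (F : ℕ → ℂ) :
    ∑ v ∈ CFin C, F (wt v) = ∑ i ∈ Finset.range 25, (beta C i : ℂ) * F i := by
  classical
  rw [← Finset.sum_fiberwise_of_maps_to (g := wt) (t := Finset.range 25)
    (fun v _ => Finset.mem_range.mpr (Nat.lt_succ_of_le (wt_le24 v)))
    (fun v => F (wt v))]
  refine Finset.sum_congr rfl (fun i _ => ?_)
  rw [Finset.sum_congr rfl (fun v hv => by
    rw [(Finset.mem_filter.mp hv).2])]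
  rw [Finset.sum_const, nsmul_eq_mul]
  rfl

lemma rel {C : Set (Fin 24 → ZMod 3)} (hC : IsSelfDual C) (b : ℂ) :
    ∑ i ∈ Finset.range 25, (beta C i : ℂ) * ((1 + 2 * b) ^ (24 - i) * (1 - b) ^ i)
      = 3 ^ 12 * ∑ i ∈ Finset.range 25, (beta C i : ℂ) * b ^ i := by
  rw [← group_sum C (fun i => (1 + 2 * b) ^ (24 - i) * (1 - b) ^ i),
    ← group_sum C (fun i => b ^ i), macwilliams hC b, card_CFin hC]
  norm_num

lemma wt_dvd {C : Set (Fin 24 → ZMod 3)} (hC : IsSelfDual C)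
    {v : Fin 24 → ZMod 3} (hv : v ∈ C) : 3 ∣ wt v := by
  classical
  have h0 : ∑ i, v i * v i = 0 := dual_apply hC hv v hv
  have h1 : ∀ a : ZMod 3, a * a = if a ≠ 0 then 1 else 0 := by decide
  have h2 : ((wt v : ℕ) : ZMod 3) = 0 := by
    rw [← h0]
    rw [Finset.sum_congr rfl (fun i _ => h1 (v i))]
    rw [Finset.sum_ite, Finset.sum_const, Finset.sum_const]
    simp [wt]
  exact (ZMod.natCast_eq_zero_iff _ 3).mp h2

lemma beta_zero {C : Set (Fin 24 → ZMod 3)} (hC : IsSelfDual C) : beta C 0 = 1 := by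
  classical
  rw [beta]
  rw [show (CFin C).filter (fun v => wt v = 0) = {0} from ?_]
  · exact Finset.card_singleton _
  · ext v
    simp only [Finset.mem_filter, Finset.mem_singleton, mem_CFin, wt_eq_zero_iff]
    constructor
    · exact fun h => h.2
    · intro h; subst h; exact ⟨code_zero_mem hC, rfl⟩

lemma beta_ndvd {C : Set (Fin 24 → ZMod 3)} (hC : IsSelfDual C) {i : ℕ}
    (h : ¬ 3 ∣ i) : beta C i = 0 := by
  classical
  rw [beta, Finset.card_eq_zero]
  rw [Finset.filter_eq_empty_iff]
  intro v hv hwt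
  exact h (hwt ▸ wt_dvd hC (mem_CFin.mp hv))

lemma ncard_eq (C : Set (Fin 24 → ZMod 3)) (i : ℕ) :
    {x ∈ C | wt x = i}.ncard = beta C i := by
  classical
  rw [beta, ← Set.ncard_coe_finset]
  congr 1
  ext x
  simp [mem_CFin, Set.mem_setOf_eq]

lemma key_complex {C : Set (Fin 24 → ZMod 3)} (hC : IsSelfDual C) :
    (beta C 24 : ℂ) = 48 - 21 * (beta C 3 : ℂ) + (beta C 6 : ℂ) := by
  have h1 := rel hC 1
  have h2 := rel hC 2
  have h3 := rel hC 3
  have h4 := rel hC 4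
  have h5 := rel hC 5
  have h6 := rel hC 6
  have z1 : beta C 1 = 0 := beta_ndvd hC (by norm_num)
  have z2 : beta C 2 = 0 := beta_ndvd hC (by norm_num)
  have z4 : beta C 4 = 0 := beta_ndvd hC (by norm_num)
  have z5 : beta C 5 = 0 := beta_ndvd hC (by norm_num)
  have z7 : beta C 7 = 0 := beta_ndvd hC (by norm_num)
  have z8 : beta C 8 = 0 := beta_ndvd hC (by norm_num)
  have z10 : beta C 10 = 0 := beta_ndvd hC (by norm_num)
  have z11 : beta C 11 = 0 := beta_ndvd hC (by norm_num)
  have z13 : beta C 13 = 0 := beta_ndvd hC (by norm_num)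
  have z14 : beta C 14 = 0 := beta_ndvd hC (by norm_num)
  have z16 : beta C 16 = 0 := beta_ndvd hC (by norm_num)
  have z17 : beta C 17 = 0 := beta_ndvd hC (by norm_num)
  have z19 : beta C 19 = 0 := beta_ndvd hC (by norm_num)
  have z20 : beta C 20 = 0 := beta_ndvd hC (by norm_num)
  have z22 : beta C 22 = 0 := beta_ndvd hC (by norm_num)
  have z23 : beta C 23 = 0 := beta_ndvd hC (by norm_num)
  have z0 : beta C 0 = 1 := beta_zero hC
  simp only [Finset.sum_range_succ, Finset.sum_range_zero, z1, z2, z4, z5, z7, z8, z10, z11, z13, z14, z16, z17, z19, z20, z22, z23, z0,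
    Nat.cast_zero, Nat.cast_one, zero_mul, one_mul, mul_zero, add_zero, zero_add]
    at h1 h2 h3 h4 h5 h6
  norm_num at h1 h2 h3 h4 h5 h6
  linear_combination ((1851271252035089959788494357519 / 921685799040599252245631512799687990400) : ℂ) * h1 + ((-472106014131789112414144121 / 4962692109934547155168403597816003615232) : ℂ) * h2 + ((1070701840309642491730849 / 9040782757715783421681842718156313136640) : ℂ) * h3 + ((-8854753494501355874620949 / 18839831225775918422102105403455808996303360) : ℂ) * h4 + ((69797559333859840862471 / 24621720172697991908483238759164399754662400) : ℂ) * h5 + ((-50435735715030922993 / 3394215115654635326174602774053600939542400) : ℂ) * h6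

lemma key_int {C : Set (Fin 24 → ZMod 3)} (hC : IsSelfDual C) :
    (beta C 24 : ℤ) = 48 - 21 * (beta C 3 : ℤ) + (beta C 6 : ℤ) := by
  have h := key_complex hC
  have h2 : ((beta C 24 : ℤ) : ℂ) = ((48 - 21 * (beta C 3 : ℤ) + (beta C 6 : ℤ) : ℤ) : ℂ) := by
    push_cast
    linear_combination h
  exact_mod_cast h2

end Code

/-- Every ternary self-dual code of length 24 satisfies
`β₂₄ = 48 - 21β₃ + β₆`; consequently, if `C` has no codeword of weight 24,
then `C` has minimum weight 3. -/
theorem weight_24_count_and_min_weight (C : Set (Fin 24 → ZMod 3))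
    (hC : IsSelfDual C) :
    (({x ∈ C | wt x = 24}.ncard : ℤ)
        = 48 - 21 * ({x ∈ C | wt x = 3}.ncard : ℤ)
            + ({x ∈ C | wt x = 6}.ncard : ℤ)) ∧
    ((∀ x ∈ C, wt x < 24) → HasMinWeight C 3) := by
  classical
  have hkey := key_int hC
  constructor
  · rw [ncard_eq, ncard_eq, ncard_eq]
    exact hkey
  · intro h24
    have hb24 : beta C 24 = 0 := by
      rw [beta, Finset.card_eq_zero, Finset.filter_eq_empty_iff]
      intro v hv hwt
      exact absurd hwt (Nat.ne_of_lt (h24 v (mem_CFin.mp hv)))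
    rw [hb24] at hkey
    have hb3 : 0 < beta C 3 := by omega
    obtain ⟨x, hx⟩ := Finset.card_pos.mp hb3
    obtain ⟨hxC, hxw⟩ := Finset.mem_filter.mp hx
    have hxC' : x ∈ C := mem_CFin.mp hxC
    have hxne : x ≠ 0 := by
      intro h0
      rw [h0, wt_eq_zero_iff.mpr rfl] at hxw
      norm_num at hxw
    refine ⟨⟨x, hxC', hxne, hxw⟩, ?_⟩
    intro y hyC hyne
    have hd := wt_dvd hC hyC
    have hw0 : wt y ≠ 0 := fun h0 => hyne (wt_eq_zero_iff.mp h0)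
    omega



end Ternary
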